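/- Let n be a positive integer and t a real number with n/2 − 1 ≤ t ≤ n − 2. Let G be the graph on an n-element vertex set V whose edge set is the union of the edge sets of two complete graphs on vertex sets A and B, where |A| = |B| = ⌈t⌉ + 1 and A ∪ B = V (so |A ∩ B| = 2⌈t⌉ + 2 − n). Then every vertex of G has triangle-degree at least C(t,2), e(G) = C(n,2) − (n − 1 − ⌈t⌉)², and e(G) ≤ f(t) + n, where f(x) = C(t,2) + x(n − x) − C(n − x − 1, 2). -/

import Mathlib

/-- Real binomial coefficient `C(y,2) = y(y-1)/2`. -/
noncomputable def rb2 (y : ℝ) : ℝ := y * (y - 1) / 2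

/-- The function `f(x) = C(t,2) + x(n-x) - C(n-x-1,2)`. -/
noncomputable def fFun (n : ℕ) (t x : ℝ) : ℝ :=
  rb2 t + x * ((n : ℝ) - x) - rb2 ((n : ℝ) - x - 1)

/-- The triangle-degree of `v`: the number of triangles of `G` containing `v`. -/
def triangleDeg {V : Type*} [Fintype V] [DecidableEq V]
    (G : SimpleGraph V) [DecidableRel G.Adj] (v : V) : ℕ :=
  ((G.cliqueFinset 3).filter (fun s => v ∈ s)).card

/-- If `v` lies in a set `S` all of whose pairs are adjacent, then the
triangle-degree of `v` is at least `C(|S|-1, 2)`. -/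
lemma triangleDeg_ge_of_clique {V : Type*} [Fintype V] [DecidableEq V]
    (G : SimpleGraph V) [DecidableRel G.Adj] (v : V) (S : Finset V)
    (hv : v ∈ S) (hS : ∀ u w, u ∈ S → w ∈ S → u ≠ w → G.Adj u w) :
    (S.erase v).card.choose 2 ≤ triangleDeg G v := by
  rw [triangleDeg, ← Finset.card_powersetCard]
  apply Finset.card_le_card_of_injOn (fun s => insert v s)
  · intro s hs
    rw [Finset.mem_coe, Finset.mem_powersetCard] at hs
    obtain ⟨hsub, hcard⟩ := hs
    have hvs : v ∉ s := fun h => (Finset.mem_erase.mp (hsub h)).1 rfl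
    rw [Finset.mem_coe, Finset.mem_filter, SimpleGraph.mem_cliqueFinset_iff]
    refine ⟨⟨?_, ?_⟩, Finset.mem_insert_self _ _⟩
    · intro a ha b hb hab
      have hmem : ∀ x : V, x ∈ (insert v s : Finset V) → x ∈ S := by
        intro x hx
        rcases Finset.mem_insert.mp hx with h | h
        · exact h ▸ hv
        · exact Finset.mem_of_mem_erase (hsub h)
      exact hS a b (hmem a ha) (hmem b hb) hab
    · rw [Finset.card_insert_of_notMem hvs, hcard]
  · intro s hs u hu h
    rw [Finset.mem_coe, Finset.mem_powersetCard] at hs hu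
    have hvs : v ∉ s := fun hx => (Finset.mem_erase.mp (hs.1 hx)).1 rfl
    have hvu : v ∉ u := fun hx => (Finset.mem_erase.mp (hu.1 hx)).1 rfl
    have := congrArg (fun w => Finset.erase w v) h
    simpa [Finset.erase_insert hvs, Finset.erase_insert hvu] using this

/-- Properties of the construction `G₁`: the union of two complete graphs on
vertex sets `A`, `B` with `|A| = |B| = ⌈t⌉ + 1` covering all `n` vertices.
Every vertex lies in at least `C(t,2)` triangles, `e(G₁) = C(n,2) - (n-1-⌈t⌉)²`,
and `e(G₁) ≤ f(t) + n`. -/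
theorem two_cliques_construction (n : ℕ) (hn : 0 < n) (t : ℝ)
    (ht1 : (n : ℝ) / 2 - 1 ≤ t) (ht2 : t ≤ (n : ℝ) - 2)
    (V : Type) [Fintype V] [DecidableEq V] (hV : Fintype.card V = n)
    (A B : Finset V)
    (hA : (A.card : ℤ) = ⌈t⌉ + 1) (hB : (B.card : ℤ) = ⌈t⌉ + 1)
    (hAB : A ∪ B = Finset.univ)
    (G : SimpleGraph V) [DecidableRel G.Adj]
    (hAdj : ∀ u v : V, G.Adj u v ↔
      u ≠ v ∧ ((u ∈ A ∧ v ∈ A) ∨ (u ∈ B ∧ v ∈ B))) :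
    (∀ v : V, rb2 t ≤ (triangleDeg G v : ℝ)) ∧
    (G.edgeFinset.card : ℝ)
      = (n : ℝ) * ((n : ℝ) - 1) / 2 - ((n : ℝ) - 1 - (⌈t⌉ : ℝ)) ^ 2 ∧
    (G.edgeFinset.card : ℝ) ≤ fFun n t t + n := by
  have hn2 : (2 : ℝ) ≤ (n : ℝ) := by linarith [ht1.trans ht2]
  have ht0 : (0 : ℝ) ≤ t := by linarith
  have hceil : (0 : ℤ) ≤ ⌈t⌉ := Int.ceil_nonneg ht0
  have hA1 : 1 ≤ A.card := by omega
  set K : ℕ := A.card - 1 with hKdef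
  have hAK : A.card = K + 1 := by omega
  have hKZ : (K : ℤ) = ⌈t⌉ := by omega
  have hBK : B.card = K + 1 := by omega
  have hKt : t ≤ (K : ℝ) := by
    have := Int.le_ceil t
    rw [← hKZ] at this; exact_mod_cast this
  have hKt1 : (K : ℝ) < t + 1 := by
    have := Int.ceil_lt_add_one t
    rw [← hKZ] at this; exact_mod_cast this
  -- triangle degree bound
  have hTri : ∀ v : V, rb2 t ≤ (triangleDeg G v : ℝ) := by
    intro v
    have hvAB : v ∈ A ∪ B := hAB ▸ Finset.mem_univ v
    have key : K.choose 2 ≤ triangleDeg G v := by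
      rcases Finset.mem_union.mp hvAB with hv | hv
      · have := triangleDeg_ge_of_clique G v A hv (fun u w hu hw huw =>
          (hAdj u w).mpr ⟨huw, Or.inl ⟨hu, hw⟩⟩)
        rwa [Finset.card_erase_of_mem hv, hAK, Nat.add_sub_cancel] at this
      · have := triangleDeg_ge_of_clique G v B hv (fun u w hu hw huw =>
          (hAdj u w).mpr ⟨huw, Or.inr ⟨hu, hw⟩⟩)
        rwa [Finset.card_erase_of_mem hv, hBK, Nat.add_sub_cancel] at this
    have h1 : rb2 t ≤ (K.choose 2 : ℝ) := by
      rw [Nat.cast_choose_two, rb2]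
      rcases le_or_gt t 1 with h | h
      · have hKnn : (0:ℝ) ≤ (K:ℝ) * ((K:ℝ) - 1) := by
          rcases Nat.eq_zero_or_pos K with h0 | h0
          · simp [h0]
          · have : (1:ℝ) ≤ (K:ℝ) := by exact_mod_cast h0
            nlinarith
        nlinarith
      · nlinarith [mul_nonneg (by linarith : (0:ℝ) ≤ (K:ℝ) - t)
          (by linarith : (0:ℝ) ≤ (K:ℝ) + t - 1)]
    calc rb2 t ≤ (K.choose 2 : ℝ) := h1
      _ ≤ (triangleDeg G v : ℝ) := by exact_mod_cast key
  refine ⟨hTri, ?_, ?_⟩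
  all_goals
  · -- degree computation
    have hdeg : ∀ v : V, G.degree v = if v ∈ A ∩ B then n - 1 else K := by
      intro v
      rw [← SimpleGraph.card_neighborFinset_eq_degree]
      by_cases hv : v ∈ A ∩ B
      · rw [if_pos hv]
        have : G.neighborFinset v = Finset.univ.erase v := by
          ext u
          rw [SimpleGraph.mem_neighborFinset, hAdj, Finset.mem_erase]
          constructor
          · rintro ⟨hne, -⟩; exact ⟨Ne.symm hne, Finset.mem_univ u⟩
          · rintro ⟨hne, -⟩
            have huAB : u ∈ A ∪ B := hAB ▸ Finset.mem_univ u
            rcases Finset.mem_union.mp huAB with h | h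
            · exact ⟨Ne.symm hne, Or.inl ⟨(Finset.mem_inter.mp hv).1, h⟩⟩
            · exact ⟨Ne.symm hne, Or.inr ⟨(Finset.mem_inter.mp hv).2, h⟩⟩
        rw [this, Finset.card_erase_of_mem (Finset.mem_univ v), Finset.card_univ, hV]
      · rw [if_neg hv]
        have hvAB : v ∈ A ∪ B := hAB ▸ Finset.mem_univ v
        rw [Finset.mem_inter] at hv
        rcases Finset.mem_union.mp hvAB with hvA | hvB
        · have hvB : v ∉ B := fun h => hv ⟨hvA, h⟩
          have : G.neighborFinset v = A.erase v := by
            ext u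
            rw [SimpleGraph.mem_neighborFinset, hAdj, Finset.mem_erase]
            constructor
            · rintro ⟨hne, h | h⟩
              · exact ⟨Ne.symm hne, h.2⟩
              · exact absurd h.1 hvB
            · rintro ⟨hne, hu⟩; exact ⟨Ne.symm hne, Or.inl ⟨hvA, hu⟩⟩
          rw [this, Finset.card_erase_of_mem hvA, hAK, Nat.add_sub_cancel]
        · have hvA : v ∉ A := fun h => hv ⟨h, hvB⟩
          have : G.neighborFinset v = B.erase v := by
            ext u
            rw [SimpleGraph.mem_neighborFinset, hAdj, Finset.mem_erase]
            constructor
            · rintro ⟨hne, h | h⟩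
              · exact absurd h.1 hvA
              · exact ⟨Ne.symm hne, h.2⟩
            · rintro ⟨hne, hu⟩; exact ⟨Ne.symm hne, Or.inr ⟨hvB, hu⟩⟩
          rw [this, Finset.card_erase_of_mem hvB, hBK, Nat.add_sub_cancel]
    -- sum of degrees
    have hsum : ∑ v : V, G.degree v
        = (A ∩ B).card * (n - 1) + (A ∩ B)ᶜ.card * K := by
      rw [← Finset.sum_add_sum_compl (A ∩ B)]
      congr 1
      · rw [Finset.sum_congr rfl (fun v hv => by rw [hdeg v, if_pos hv]),
          Finset.sum_const, smul_eq_mul]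
      · rw [Finset.sum_congr rfl (fun v hv => by
          rw [hdeg v, if_neg (Finset.mem_compl.mp hv)]),
          Finset.sum_const, smul_eq_mul]
    have hhand := SimpleGraph.sum_degrees_eq_twice_card_edges G
    -- cardinalities
    have hcup : (A ∪ B).card = n := by rw [hAB, Finset.card_univ, hV]
    have hinter : (A ∩ B).card + n = 2 * K + 2 := by
      have := Finset.card_inter_add_card_union A B
      omega
    have hcompl : (A ∩ B).card + (A ∩ B)ᶜ.card = n := by
      rw [Finset.card_add_card_compl, hV]
    -- key integer identity
    have hn1 : 1 ≤ n := hn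
    rw [hsum] at hhand
    have hEZ := hhand
    zify [hn1] at hEZ
    have hcR : (((A ∩ B).card : ℕ) : ℝ) = 2 * (K:ℝ) + 2 - n := by
      have : ((A ∩ B).card : ℤ) = 2 * K + 2 - n := by omega
      exact_mod_cast this
    have hccR : (((A ∩ B)ᶜ.card : ℕ) : ℝ) = (n : ℝ) - (2 * (K:ℝ) + 2 - n) := by
      have : ((A ∩ B)ᶜ.card : ℤ) = n - (2 * K + 2 - n) := by omega
      exact_mod_cast this
    have hEZ' : (((A ∩ B).card : ℕ) : ℝ) * ((n:ℝ) - 1) + (((A ∩ B)ᶜ.card : ℕ) : ℝ) * K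
        = 2 * (G.edgeFinset.card : ℝ) := by exact_mod_cast hEZ
    rw [hcR, hccR] at hEZ'
    have hER : (G.edgeFinset.card : ℝ)
        = (n : ℝ) * ((n : ℝ) - 1) / 2 - ((n : ℝ) - 1 - (K : ℝ)) ^ 2 := by
      linear_combination -hEZ' / 2
    first
    | · rw [hER]
        have : ((⌈t⌉ : ℤ) : ℝ) = (K : ℝ) := by exact_mod_cast hKZ.symm
        rw [this]
    | · rw [hER, fFun, rb2, rb2]
        nlinarith [mul_nonneg (by linarith : (0:ℝ) ≤ t + 1 - (K:ℝ))
          (by linarith : (0:ℝ) ≤ 2 * (n:ℝ) - (K:ℝ) - t - 3)]
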